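/- Let w and b₁,…,bₙ be positive integers with gcd(b₁,…,bₙ) = 1. Then g(w,(bᵢ)ᵢ) = μ²(2w) · ∏_{p ∣ w} Σ(p) · ∏_{m=1}^n ∏_{p > 2, p ∣ bᵢ for all i ≠ m, p ∤ b_m w} Σ_m(p). In particular, if also w', b'₁,…,b'ₙ are positive integers with gcd(b'₁,…,b'ₙ) = 1 and gcd(w·∏ᵢ bᵢ, w'·∏ᵢ b'ᵢ) = 1, then g(ww', (bᵢ b'ᵢ)ᵢ) = g(w,(bᵢ)ᵢ) · g(w',(b'ᵢ)ᵢ). -/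

import Mathlib

open ArithmeticFunction
open scoped ArithmeticFunction.Moebius

/-- `hⱼ(p)`: `1` if `p ≡ 1 (mod 4)`; for `p ≡ 3 (mod 4)` it is `0` if `j ∈ D` and `1`
otherwise. -/
noncomputable def hD {n : ℕ} (D : Finset (Fin n)) (j : Fin n) (p : ℕ) : ℝ :=
  if p % 4 = 1 then 1 else if j ∈ D then 0 else 1

/-- `Σ(p) = (1 + (1/p) Σⱼ hⱼ(p)/cⱼ)⁻¹`. -/
noncomputable def SigmaP {n : ℕ} (c : Fin n → ℝ) (D : Finset (Fin n)) (p : ℕ) : ℝ :=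
  (1 + (1 / (p : ℝ)) * ∑ j, hD D j p / c j)⁻¹

/-- `Σ_m(p) = Σ(p) · (1 + (1/p) Σ_{j ≠ m} hⱼ(p)/cⱼ)`. -/
noncomputable def SigmaM {n : ℕ} (c : Fin n → ℝ) (D : Finset (Fin n)) (m : Fin n)
    (p : ℕ) : ℝ :=
  SigmaP c D p * (1 + (1 / (p : ℝ)) * ∑ j ∈ Finset.univ.erase m, hD D j p / c j)

open Classical in
/-- `F(d₁,…,dₙ)`. -/
noncomputable def Ffun {n : ℕ} (c : Fin n → ℝ) (D : Finset (Fin n))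
    (d : Fin n → ℕ) : ℝ :=
  ∏ p ∈ (∏ j, d j).primeFactors.filter (fun p => 2 < p),
    ((1 + (1 / (p : ℝ)) * ∑ j, hD D j p / c j)⁻¹ *
      (1 + (1 / (p : ℝ)) *
        ∑ j ∈ Finset.univ.filter (fun j : Fin n => ¬ p ∣ d j), hD D j p / c j))

/-- `g(w,(bᵢ)ᵢ) = μ²(2w)·F(d₁,…,dₙ)` with `dⱼ = w · gcd{bᵢ : i ≠ j}`. -/
noncomputable def gFun {n : ℕ} (c : Fin n → ℝ) (D : Finset (Fin n))
    (w : ℕ) (b : Fin n → ℕ) : ℝ :=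
  (μ (2 * w) : ℝ) ^ 2 *
    Ffun c D (fun j => w * Finset.gcd (Finset.univ.erase j) b)

/-- If `2*w` is squarefree then `w` is odd. -/
lemma odd_of_sf {w : ℕ} (h : Squarefree (2 * w)) : ¬ 2 ∣ w := by
  rintro ⟨k, rfl⟩
  have h4 : (2 * 2) ∣ 2 * (2 * k) := ⟨k, by ring⟩
  exact Nat.prime_two.not_isUnit (h 2 h4)

lemma moebius_sq_of_sf {m : ℕ} (h : Squarefree m) : ((μ m : ℤ) : ℝ) ^ 2 = 1 := by
  rw [moebius_apply_of_squarefree h]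
  push_cast
  rw [← pow_mul, mul_comm, pow_mul]
  norm_num

/-- nonvanishing of the partial gcds -/
lemma G_ne_zero {n : ℕ} (hn : 2 ≤ n) (b : Fin n → ℕ) (hb : ∀ i, 0 < b i) (j : Fin n) :
    Finset.gcd (Finset.univ.erase j) b ≠ 0 := by
  intro h
  have hnt : Nontrivial (Fin n) := Fin.nontrivial_iff_two_le.mpr hn
  obtain ⟨i, hi⟩ := exists_ne j
  have := Finset.gcd_eq_zero_iff.mp h i (Finset.mem_erase.mpr ⟨hi, Finset.mem_univ i⟩)
  exact (hb i).ne' this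

/-- a prime dividing `G m` cannot divide `b m` -/
lemma G_not_dvd {n : ℕ} (b : Fin n → ℕ) (hgcd : Finset.gcd Finset.univ b = 1)
    (p : ℕ) (m : Fin n) (hp : p.Prime) (hpG : p ∣ Finset.gcd (Finset.univ.erase m) b) :
    ¬ p ∣ b m := by
  intro hpb
  have h1 : p ∣ Finset.gcd Finset.univ b := by
    rw [← Finset.insert_erase (Finset.mem_univ m), Finset.gcd_insert]
    exact dvd_gcd hpb hpG
  rw [hgcd] at h1
  exact hp.ne_one (Nat.eq_one_of_dvd_one h1)

/-- a prime cannot divide two different partial gcds -/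
lemma G_not_dvd_two {n : ℕ} (b : Fin n → ℕ) (hgcd : Finset.gcd Finset.univ b = 1)
    (p : ℕ) (m m' : Fin n) (hp : p.Prime) (hmm : m ≠ m')
    (hpG : p ∣ Finset.gcd (Finset.univ.erase m) b)
    (hpG' : p ∣ Finset.gcd (Finset.univ.erase m') b) : False := by
  have h1 : p ∣ b m :=
    hpG'.trans (Finset.gcd_dvd (Finset.mem_erase.mpr ⟨hmm, Finset.mem_univ m⟩))
  exact G_not_dvd b hgcd p m hp hpG h1

open Classical in
lemma key_formula {n : ℕ} (hn : 2 ≤ n) (c : Fin n → ℝ)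
    (D : Finset (Fin n)) (w : ℕ) (hw : 0 < w) (b : Fin n → ℕ) (hb : ∀ i, 0 < b i)
    (hgcd : Finset.gcd Finset.univ b = 1) :
    gFun c D w b
      = (μ (2 * w) : ℝ) ^ 2 * (∏ p ∈ w.primeFactors, SigmaP c D p) *
        ∏ m : Fin n,
          ∏ p ∈ (Finset.gcd (Finset.univ.erase m) b).primeFactors.filter
              (fun p => 2 < p ∧ ¬ p ∣ b m * w), SigmaM c D m p := by
  by_cases hsf : Squarefree (2 * w)
  swap
  · simp [gFun, moebius_eq_zero_of_not_squarefree hsf]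
  have hw2 : ¬ 2 ∣ w := odd_of_sf hsf
  set G : Fin n → ℕ := fun j => Finset.gcd (Finset.univ.erase j) b with hGdef
  have hG0 : ∀ j, G j ≠ 0 := G_ne_zero hn b hb
  have hGb : ∀ (p : ℕ) (m : Fin n), p.Prime → p ∣ G m → ¬ p ∣ b m :=
    fun p m hp hpG => G_not_dvd b hgcd p m hp hpG
  set T : Fin n → Finset ℕ := fun m =>
    (G m).primeFactors.filter (fun p => 2 < p ∧ ¬ p ∣ b m * w) with hTdef
  have j₀ : Fin n := ⟨0, by omega⟩
  have hS : ((∏ j, w * G j).primeFactors).filter (fun p => 2 < p)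
      = w.primeFactors ∪ Finset.univ.biUnion T := by
    ext p
    simp only [Finset.mem_filter, Nat.mem_primeFactors, Finset.mem_union,
      Finset.mem_biUnion, Finset.mem_univ, true_and, hTdef]
    constructor
    · rintro ⟨⟨hp, hpd, -⟩, h2p⟩
      by_cases hpw : p ∣ w
      · exact Or.inl ⟨hp, hpw, hw.ne'⟩
      · rw [hp.prime.dvd_finset_prod_iff] at hpd
        obtain ⟨j, -, hpj⟩ := hpd
        have hpG : p ∣ G j := (hp.dvd_mul.mp hpj).resolve_left hpw
        refine Or.inr ⟨j, ⟨hp, hpG, hG0 j⟩, h2p, ?_⟩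
        intro h
        rcases hp.dvd_mul.mp h with h | h
        · exact hGb p j hp hpG h
        · exact hpw h
    · rintro (⟨hp, hpw, -⟩ | ⟨m, ⟨hp, hpG, -⟩, h2p, hpb⟩)
      · have hp2 := hp.two_le
        have hpne2 : p ≠ 2 := by rintro rfl; exact hw2 hpw
        refine ⟨⟨hp, ?_, ?_⟩, by omega⟩
        · exact (hpw.mul_right (G j₀)).trans
            (Finset.dvd_prod_of_mem (fun j => w * G j) (Finset.mem_univ j₀))
        · exact Finset.prod_ne_zero_iff.mpr
            (fun j _ => Nat.mul_ne_zero hw.ne' (hG0 j))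
      · refine ⟨⟨hp, ?_, ?_⟩, h2p⟩
        · exact (hpG.mul_left w).trans
            (Finset.dvd_prod_of_mem (fun j => w * G j) (Finset.mem_univ m))
        · exact Finset.prod_ne_zero_iff.mpr
            (fun j _ => Nat.mul_ne_zero hw.ne' (hG0 j))
  have hdisj1 : Disjoint w.primeFactors (Finset.univ.biUnion T) := by
    rw [Finset.disjoint_left]
    intro p hpw hpb
    simp only [Finset.mem_biUnion, Finset.mem_univ, true_and, hTdef,
      Finset.mem_filter] at hpb
    obtain ⟨m, -, -, hnb⟩ := hpb
    exact hnb (((Nat.mem_primeFactors.mp hpw).2.1).mul_left (b m))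
  have hdisj2 : Set.PairwiseDisjoint ((Finset.univ : Finset (Fin n)) : Set (Fin n)) T := by
    intro m _ m' _ hmm
    rw [Function.onFun, Finset.disjoint_left]
    intro p hpm hpm'
    simp only [hTdef, Finset.mem_filter, Nat.mem_primeFactors] at hpm hpm'
    exact G_not_dvd_two b hgcd p m m' hpm.1.1 hmm hpm.1.2.1 hpm'.1.2.1
  -- now compute
  simp only [gFun, Ffun, ← hGdef]
  rw [hS, Finset.prod_union hdisj1, Finset.prod_biUnion hdisj2]
  have h1 : ∀ p ∈ w.primeFactors,
      ((1 + (1 / (p : ℝ)) * ∑ j, hD D j p / c j)⁻¹ *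
        (1 + (1 / (p : ℝ)) *
          ∑ j ∈ Finset.univ.filter (fun j : Fin n => ¬ p ∣ w * G j),
            hD D j p / c j)) = SigmaP c D p := by
    intro p hp
    have hpw : p ∣ w := (Nat.mem_primeFactors.mp hp).2.1
    have he : Finset.univ.filter (fun j : Fin n => ¬ p ∣ w * G j) = ∅ :=
      Finset.filter_eq_empty_iff.mpr
        (fun j _ => not_not_intro (hpw.mul_right (G j)))
    rw [he]
    simp [SigmaP]
  have h2 : ∀ m : Fin n, ∀ p ∈ T m,
      ((1 + (1 / (p : ℝ)) * ∑ j, hD D j p / c j)⁻¹ *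
        (1 + (1 / (p : ℝ)) *
          ∑ j ∈ Finset.univ.filter (fun j : Fin n => ¬ p ∣ w * G j),
            hD D j p / c j)) = SigmaM c D m p := by
    intro m p hp
    simp only [hTdef, Finset.mem_filter, Nat.mem_primeFactors] at hp
    obtain ⟨⟨hpp, hpG, -⟩, h2p, hpb⟩ := hp
    have hpw : ¬ p ∣ w := fun h => hpb (h.mul_left (b m))
    have he : Finset.univ.filter (fun j : Fin n => ¬ p ∣ w * G j)
        = Finset.univ.erase m := by
      ext j
      simp only [Finset.mem_filter, Finset.mem_univ, true_and, Finset.mem_erase,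
        and_true]
      constructor
      · intro h hjm
        exact h (hjm ▸ hpG.mul_left w)
      · intro hjm h
        rcases hpp.dvd_mul.mp h with h | h
        · exact hpw h
        · exact G_not_dvd_two b hgcd p j m hpp hjm h hpG
    rw [he, SigmaM, SigmaP]
  rw [Finset.prod_congr rfl h1,
    Finset.prod_congr rfl (fun m _ => Finset.prod_congr rfl (h2 m)), mul_assoc]

open Classical in
/-- if `gcd(b₁,…,bₙ) = 1` then
`g(w,(bᵢ)) = μ²(2w) ∏_{p∣w} Σ(p) ∏_{m=1}^n ∏_{p>2, p∣bᵢ ∀i≠m, p∤b_m w} Σ_m(p)`;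
in particular `g` is multiplicative in the stated sense. -/
theorem stmt_11 (n : ℕ) (hn : 2 ≤ n) (c : Fin n → ℝ) (hc : ∀ i, 1 ≤ c i)
    (D : Finset (Fin n)) (w : ℕ) (hw : 0 < w) (b : Fin n → ℕ) (hb : ∀ i, 0 < b i)
    (hgcd : Finset.gcd Finset.univ b = 1) :
    gFun c D w b
      = (μ (2 * w) : ℝ) ^ 2 * (∏ p ∈ w.primeFactors, SigmaP c D p) *
        ∏ m : Fin n,
          ∏ p ∈ (Finset.gcd (Finset.univ.erase m) b).primeFactors.filter
              (fun p => 2 < p ∧ ¬ p ∣ b m * w), SigmaM c D m p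
    ∧ ∀ w' : ℕ, 0 < w' → ∀ b' : Fin n → ℕ, (∀ i, 0 < b' i) →
        Finset.gcd Finset.univ b' = 1 →
        Nat.Coprime (w * ∏ i, b i) (w' * ∏ i, b' i) →
        gFun c D (w * w') (fun i => b i * b' i) = gFun c D w b * gFun c D w' b' := by
  constructor
  · exact key_formula hn c D w hw b hb hgcd
  intro w' hw' b' hb' hgcd' K
  by_cases hsf : Squarefree (2 * w)
  swap
  · have h1 : ¬ Squarefree (2 * (w * w')) :=
      fun h => hsf (h.squarefree_of_dvd ⟨w', by ring⟩)
    simp [gFun, moebius_eq_zero_of_not_squarefree h1,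
      moebius_eq_zero_of_not_squarefree hsf]
  by_cases hsf' : Squarefree (2 * w')
  swap
  · have h1 : ¬ Squarefree (2 * (w * w')) :=
      fun h => hsf' (h.squarefree_of_dvd ⟨w, by ring⟩)
    simp [gFun, moebius_eq_zero_of_not_squarefree h1,
      moebius_eq_zero_of_not_squarefree hsf']
  -- main case
  have hPB : ∀ p : ℕ, p.Prime → p ∣ w * ∏ i, b i → ¬ p ∣ w' * ∏ i, b' i := by
    intro p hp h1 h2
    have hd : p ∣ Nat.gcd (w * ∏ i, b i) (w' * ∏ i, b' i) := Nat.dvd_gcd h1 h2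
    rw [K.gcd_eq_one] at hd
    exact hp.ne_one (Nat.eq_one_of_dvd_one hd)
  have hgcd'' : Finset.gcd Finset.univ (fun i => b i * b' i) = 1 := by
    rw [Nat.eq_one_iff_not_exists_prime_dvd]
    intro p hp hpd
    have hall : ∀ i, p ∣ b i * b' i :=
      fun i => hpd.trans (Finset.gcd_dvd (Finset.mem_univ i))
    have i₀ : Fin n := ⟨0, by omega⟩
    rcases hp.dvd_mul.mp (hall i₀) with h | h
    · have hpB : p ∣ w * ∏ i, b i :=
        (h.trans (Finset.dvd_prod_of_mem b (Finset.mem_univ i₀))).mul_left w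
      have hnb' : ∀ i, ¬ p ∣ b' i := fun i hi => hPB p hp hpB
        ((hi.trans (Finset.dvd_prod_of_mem b' (Finset.mem_univ i))).mul_left w')
      have : p ∣ Finset.gcd Finset.univ b :=
        Finset.dvd_gcd (fun i _ => (hp.dvd_mul.mp (hall i)).resolve_right (hnb' i))
      rw [hgcd] at this
      exact hp.ne_one (Nat.eq_one_of_dvd_one this)
    · have hpB' : p ∣ w' * ∏ i, b' i :=
        (h.trans (Finset.dvd_prod_of_mem b' (Finset.mem_univ i₀))).mul_left w'
      have hnb : ∀ i, ¬ p ∣ b i := fun i hi => hPB p hp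
        ((hi.trans (Finset.dvd_prod_of_mem b (Finset.mem_univ i))).mul_left w) hpB'
      have : p ∣ Finset.gcd Finset.univ b' :=
        Finset.dvd_gcd (fun i _ => (hp.dvd_mul.mp (hall i)).resolve_left (hnb i))
      rw [hgcd'] at this
      exact hp.ne_one (Nat.eq_one_of_dvd_one this)
  have hww' : Nat.Coprime w w' :=
    Nat.Coprime.coprime_dvd_right (dvd_mul_right w' _)
      (Nat.Coprime.coprime_dvd_left (dvd_mul_right w _) K)
  have hsfw : Squarefree w := hsf.squarefree_of_dvd (dvd_mul_left w 2)
  have hsfw' : Squarefree w' := hsf'.squarefree_of_dvd (dvd_mul_left w' 2)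
  have hsf'' : Squarefree (2 * (w * w')) := by
    rw [show 2 * (w * w') = (2 * w) * w' by ring, Nat.squarefree_mul_iff]
    refine ⟨Nat.Coprime.mul ?_ hww', hsf, hsfw'⟩
    exact (Nat.prime_two.coprime_iff_not_dvd).mpr (odd_of_sf hsf')
  -- per-m set splitting
  have hGdvd : ∀ (b : Fin n → ℕ) (m : Fin n) (p : ℕ),
      p ∣ Finset.gcd (Finset.univ.erase m) b → p ∣ ∏ i, b i := by
    intro b m p h
    have hnt : Nontrivial (Fin n) := Fin.nontrivial_iff_two_le.mpr hn
    obtain ⟨i, hi⟩ := exists_ne m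
    exact (h.trans (Finset.gcd_dvd (Finset.mem_erase.mpr ⟨hi, Finset.mem_univ i⟩))).trans
      (Finset.dvd_prod_of_mem b (Finset.mem_univ i))
  have hU : ∀ m : Fin n,
      (Finset.gcd (Finset.univ.erase m) (fun i => b i * b' i)).primeFactors.filter
          (fun p => 2 < p ∧ ¬ p ∣ (b m * b' m) * (w * w'))
        = (Finset.gcd (Finset.univ.erase m) b).primeFactors.filter
            (fun p => 2 < p ∧ ¬ p ∣ b m * w)
          ∪ (Finset.gcd (Finset.univ.erase m) b').primeFactors.filter
            (fun p => 2 < p ∧ ¬ p ∣ b' m * w') := by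
    intro m
    ext p
    simp only [Finset.mem_filter, Finset.mem_union, Nat.mem_primeFactors]
    constructor
    · rintro ⟨⟨hp, hpG, -⟩, h2p, hnd⟩
      have hall : ∀ i ∈ Finset.univ.erase m, p ∣ b i * b' i :=
        fun i hi => hpG.trans (Finset.gcd_dvd hi)
      have hnt : Nontrivial (Fin n) := Fin.nontrivial_iff_two_le.mpr hn
      obtain ⟨i₀, hi₀⟩ := exists_ne m
      have hi₀m : i₀ ∈ Finset.univ.erase m := Finset.mem_erase.mpr ⟨hi₀, Finset.mem_univ i₀⟩
      rcases hp.dvd_mul.mp (hall i₀ hi₀m) with h | h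
      · have hpB : p ∣ w * ∏ i, b i :=
          (h.trans (Finset.dvd_prod_of_mem b (Finset.mem_univ i₀))).mul_left w
        have hnB' := hPB p hp hpB
        have hnb' : ∀ i, ¬ p ∣ b' i := fun i hi => hnB'
          ((hi.trans (Finset.dvd_prod_of_mem b' (Finset.mem_univ i))).mul_left w')
        refine Or.inl ⟨⟨hp, Finset.dvd_gcd (fun i hi =>
          (hp.dvd_mul.mp (hall i hi)).resolve_right (hnb' i)),
          G_ne_zero hn b hb m⟩, h2p, ?_⟩
        exact fun hd => hnd (hd.trans ⟨b' m * w', by ring⟩)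
      · have hpB' : p ∣ w' * ∏ i, b' i :=
          (h.trans (Finset.dvd_prod_of_mem b' (Finset.mem_univ i₀))).mul_left w'
        have hnB : ¬ p ∣ w * ∏ i, b i := fun h1 => hPB p hp h1 hpB'
        have hnb : ∀ i, ¬ p ∣ b i := fun i hi => hnB
          ((hi.trans (Finset.dvd_prod_of_mem b (Finset.mem_univ i))).mul_left w)
        refine Or.inr ⟨⟨hp, Finset.dvd_gcd (fun i hi =>
          (hp.dvd_mul.mp (hall i hi)).resolve_left (hnb i)),
          G_ne_zero hn b' hb' m⟩, h2p, ?_⟩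
        exact fun hd => hnd (hd.trans ⟨b m * w, by ring⟩)
    · have hG0'' : Finset.gcd (Finset.univ.erase m) (fun i => b i * b' i) ≠ 0 :=
        G_ne_zero hn _ (fun i => Nat.mul_pos (hb i) (hb' i)) m
      rintro (⟨⟨hp, hpG, -⟩, h2p, hnd⟩ | ⟨⟨hp, hpG, -⟩, h2p, hnd⟩)
      · have hpB : p ∣ w * ∏ i, b i := (hGdvd b m p hpG).mul_left w
        have hnB' := hPB p hp hpB
        refine ⟨⟨hp, Finset.dvd_gcd (fun i hi =>
          ((hpG.trans (Finset.gcd_dvd hi)).mul_right (b' i))), hG0''⟩, h2p, ?_⟩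
        intro hd
        rcases hp.dvd_mul.mp hd with h | h
        · rcases hp.dvd_mul.mp h with h | h
          · exact hnd (h.mul_right w)
          · exact hnB' ((h.trans (Finset.dvd_prod_of_mem b'
              (Finset.mem_univ m))).mul_left w')
        · rcases hp.dvd_mul.mp h with h | h
          · exact hnd (h.mul_left (b m))
          · exact hnB' (h.mul_right _)
      · have hpB' : p ∣ w' * ∏ i, b' i := (hGdvd b' m p hpG).mul_left w'
        have hnB : ¬ p ∣ w * ∏ i, b i := fun h1 => hPB p hp h1 hpB'
        refine ⟨⟨hp, Finset.dvd_gcd (fun i hi =>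
          ((hpG.trans (Finset.gcd_dvd hi)).mul_left (b i))), hG0''⟩, h2p, ?_⟩
        intro hd
        rcases hp.dvd_mul.mp hd with h | h
        · rcases hp.dvd_mul.mp h with h | h
          · exact hnB ((h.trans (Finset.dvd_prod_of_mem b
              (Finset.mem_univ m))).mul_left w)
          · exact hnd (h.mul_right w')
        · rcases hp.dvd_mul.mp h with h | h
          · exact hnB (h.mul_right _)
          · exact hnd (h.mul_left (b' m))
  have hUdisj : ∀ m : Fin n,
      Disjoint ((Finset.gcd (Finset.univ.erase m) b).primeFactors.filter
            (fun p => 2 < p ∧ ¬ p ∣ b m * w))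
        ((Finset.gcd (Finset.univ.erase m) b').primeFactors.filter
            (fun p => 2 < p ∧ ¬ p ∣ b' m * w')) := by
    intro m
    rw [Finset.disjoint_left]
    intro p hp1 hp2
    simp only [Finset.mem_filter, Nat.mem_primeFactors] at hp1 hp2
    exact hPB p hp1.1.1 ((hGdvd b m p hp1.1.2.1).mul_left w)
      ((hGdvd b' m p hp2.1.2.1).mul_left w')
  have hP : (∏ p ∈ (w * w').primeFactors, SigmaP c D p)
      = (∏ p ∈ w.primeFactors, SigmaP c D p) *
        ∏ p ∈ w'.primeFactors, SigmaP c D p := by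
    rw [Nat.primeFactors_mul hw.ne' hw'.ne',
      Finset.prod_union hww'.disjoint_primeFactors]
  have hM : (∏ m : Fin n,
        ∏ p ∈ (Finset.gcd (Finset.univ.erase m) (fun i => b i * b' i)).primeFactors.filter
            (fun p => 2 < p ∧ ¬ p ∣ (b m * b' m) * (w * w')), SigmaM c D m p)
      = (∏ m : Fin n,
          ∏ p ∈ (Finset.gcd (Finset.univ.erase m) b).primeFactors.filter
              (fun p => 2 < p ∧ ¬ p ∣ b m * w), SigmaM c D m p) *
        ∏ m : Fin n,
          ∏ p ∈ (Finset.gcd (Finset.univ.erase m) b').primeFactors.filter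
              (fun p => 2 < p ∧ ¬ p ∣ b' m * w'), SigmaM c D m p := by
    rw [← Finset.prod_mul_distrib]
    refine Finset.prod_congr rfl fun m _ => ?_
    rw [hU m, Finset.prod_union (hUdisj m)]
  rw [key_formula hn c D (w * w') (Nat.mul_pos hw hw') (fun i => b i * b' i)
      (fun i => Nat.mul_pos (hb i) (hb' i)) hgcd'',
    key_formula hn c D w hw b hb hgcd, key_formula hn c D w' hw' b' hb' hgcd',
    hP, hM, moebius_sq_of_sf hsf, moebius_sq_of_sf hsf', moebius_sq_of_sf hsf'']
  ring
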